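/- In a Grothendieck abelian category C with generator U, an object I is injective if and only if for every subobject U' ⊆ U, every morphism U' → I extends to U → I (Baer's criterion in Grothendieck categories). -/

import Mathlib

open CategoryTheory CategoryTheory.Limits

namespace BaerAux

universe v u

variable {C : Type u} [Category.{v} C] [Abelian C]

/-- A partial extension of `f : X ⟶ I` along the mono `i : X ⟶ Y`:
a subobject `A` of `Y` through which `i` factors, together with a map `φ : A ⟶ I`
compatible with `f`. -/
structure Ext {X Y I : C} (i : X ⟶ Y) (f : X ⟶ I) where
  A : Subobject Y
  fac : A.Factors i
  φ : (A : C) ⟶ I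
  comm : A.factorThru i fac ≫ φ = f

variable {X Y I : C} {i : X ⟶ Y} {f : X ⟶ I}

instance : Preorder (Ext i f) where
  le p q := ∃ h : p.A ≤ q.A, Subobject.ofLE _ _ h ≫ q.φ = p.φ
  le_refl p := ⟨le_rfl, by
    have : Subobject.ofLE p.A p.A le_rfl = 𝟙 _ := by
      apply (cancel_mono p.A.arrow).1; simp
    rw [this, Category.id_comp]⟩
  le_trans p q r := by
    rintro ⟨h₁, e₁⟩ ⟨h₂, e₂⟩
    refine ⟨h₁.trans h₂, ?_⟩
    have : Subobject.ofLE p.A r.A (h₁.trans h₂) =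
        Subobject.ofLE p.A q.A h₁ ≫ Subobject.ofLE q.A r.A h₂ := by
      apply (cancel_mono r.A.arrow).1; simp
    rw [this, Category.assoc, e₂, e₁]

/-- The base partial extension, on `Subobject.mk i` itself. -/
noncomputable def Ext.base (i : X ⟶ Y) (f : X ⟶ I) [Mono i] : Ext i f where
  A := Subobject.mk i
  fac := Subobject.mk_factors_self i
  φ := (Subobject.underlyingIso i).hom ≫ f
  comm := by
    have : (Subobject.mk i).factorThru i (Subobject.mk_factors_self i) =
        (Subobject.underlyingIso i).inv := by
      apply (cancel_mono (Subobject.mk i).arrow).1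
      simp
    rw [this]; simp

section Chain
variable [HasColimits C] [HasFilteredColimits C] [AB5 C] [WellPowered.{v} C]

instance : Small.{v} (Ext i f) := by
  refine small_of_injective (f := fun p : Ext i f =>
    (⟨p.A, p.φ⟩ : Σ A : Subobject Y, ((A : C) ⟶ I))) ?_
  rintro ⟨A, fa, φ, co⟩ ⟨A', fa', φ', co'⟩ h
  injection h with h1 h2
  subst h1
  obtain rfl := eq_of_heq h2
  rfl

lemma chain_ub (c : Set (Ext i f)) (hc : IsChain (· ≤ ·) c) (hne : c.Nonempty) :
    ∃ ub, ∀ p ∈ c, p ≤ ub := by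
  classical
  -- the index category
  let J : Type _ := c
  haveI : Nonempty J := hne.to_subtype
  haveI : IsDirected J (· ≤ ·) := ⟨fun a b => by
    rcases eq_or_ne a b with rfl | hab
    · exact ⟨a, le_rfl, le_rfl⟩
    · rcases hc.total a.2 b.2 with h | h
      · exact ⟨b, h, le_rfl⟩
      · exact ⟨a, le_rfl, h⟩⟩
  haveI : EssentiallySmall.{v} J := essentiallySmall_of_small_of_locallySmall _
  let K := SmallModel.{v} J
  let e : J ≌ K := equivSmallModel J
  haveI : IsFiltered K := IsFiltered.of_equivalence e
  haveI : Nonempty K := ⟨e.functor.obj (Classical.ofNonempty)⟩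
  -- the diagram
  have mon : Monotone (fun p : J => p.1.A) := fun a b h => h.1
  let G : J ⥤ C := mon.functor ⋙ Subobject.underlying
  let F : K ⥤ C := e.inverse ⋙ G
  -- the cocone over Y
  let cY : Cocone F := ⟨Y, ⟨fun k => ((e.inverse.obj k).1.A).arrow, by
    intro k k' g
    dsimp [F, G]
    exact (Subobject.underlying_arrow (mon.functor.map (e.inverse.map g))).trans
      (Category.comp_id _).symm⟩⟩
  let m : colimit F ⟶ Y := colimit.desc F cY
  -- m is a mono, by AB5
  haveI : Mono m := by
    let α : F ⟶ (Functor.const K).obj Y :=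
      ⟨fun k => ((e.inverse.obj k).1.A).arrow, by
        intro k k' g; dsimp [F, G]; exact (Subobject.underlying_arrow (mon.functor.map (e.inverse.map g))).trans (Category.comp_id _).symm⟩
    haveI : ∀ k, Mono (α.app k) := fun k => by dsimp [α]; exact Subobject.arrow_mono _
    haveI : Mono α := NatTrans.mono_of_mono_app α
    haveI : Mono (colimMap α) := by
      haveI := HasExactColimitsOfShape.preservesFiniteLimits (J := K) (C := C)
      haveI : (colim (J := K) (C := C)).PreservesMonomorphisms :=
        preservesMonomorphisms_of_preservesLimitsOfShape _
      exact (colim (J := K) (C := C)).map_mono α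
    -- the colimit of the constant functor maps isomorphically to Y
    let d : colimit ((Functor.const K).obj Y) ⟶ Y :=
      colimit.desc _ ⟨Y, ⟨fun _ => 𝟙 Y, by simp⟩⟩
    have hsplit : ∀ k k' : K, colimit.ι ((Functor.const K).obj Y) k =
        colimit.ι ((Functor.const K).obj Y) k' := by
      intro k k'
      have h1 := colimit.w ((Functor.const K).obj Y) (IsFiltered.leftToMax k k')
      have h2 := colimit.w ((Functor.const K).obj Y) (IsFiltered.rightToMax k k')
      simp only [Functor.const_obj_map] at h1 h2
      rw [← h1, ← h2]
    haveI : IsIso d := by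
      refine ⟨colimit.ι ((Functor.const K).obj Y) (Classical.ofNonempty), ?_, ?_⟩
      · apply colimit.hom_ext
        intro k
        simp only [d, Category.comp_id, colimit.ι_desc_assoc]
        exact (Category.id_comp _).trans (hsplit _ k)
      · simp [d]
    have hm : m = colimMap α ≫ d := by
      apply colimit.hom_ext
      intro k
      simp [m, d, cY, α]
      exact (Category.comp_id _).symm
    rw [hm]
    exact mono_comp _ _
  -- the upper bound subobject
  let Astar : Subobject Y := Subobject.mk m
  -- the canonical maps into Astar
  let ι : ∀ p : J, ((p.1.A : C) ⟶ (Astar : C)) := fun p =>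
    Subobject.underlying.map (mon.functor.map (e.unit.app p)) ≫
      colimit.ι F (e.functor.obj p) ≫ (Subobject.underlyingIso m).inv
  have hι : ∀ p : J, ι p ≫ Astar.arrow = p.1.A.arrow := by
    intro p
    dsimp [ι, Astar]
    simp only [Category.assoc, Subobject.underlyingIso_arrow]
    erw [Category.assoc, Subobject.underlyingIso_arrow, colimit.ι_desc]
    exact Subobject.underlying_arrow (mon.functor.map (e.unit.app p))
  have hle : ∀ p : J, p.1.A ≤ Astar := fun p => Subobject.le_of_comm (ι p) (hι p)
  -- the map to I
  let cI : Cocone F := ⟨I, ⟨fun k => (e.inverse.obj k).1.φ, by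
    intro k k' g
    dsimp [F, G]
    rw [Category.comp_id]
    have h : (e.inverse.obj k : Ext i f) ≤ (e.inverse.obj k' : Ext i f) :=
      leOfHom (e.inverse.map g)
    obtain ⟨hA, hφ⟩ := h
    have : Subobject.underlying.map (mon.functor.map (e.inverse.map g)) =
        Subobject.ofLE _ _ hA := by
      apply (cancel_mono ((e.inverse.obj k').1.A).arrow).1
      exact (Subobject.underlying_arrow (mon.functor.map (e.inverse.map g))).trans
        (Subobject.ofLE_arrow hA).symm
    erw [this, hφ]⟩⟩
  let φstar : (Astar : C) ⟶ I := (Subobject.underlyingIso m).hom ≫ colimit.desc F cI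
  -- compatibility
  have hcompat : ∀ p : J, Subobject.ofLE _ _ (hle p) ≫ φstar = p.1.φ := by
    intro p
    have : Subobject.ofLE _ _ (hle p) = ι p := by
      apply (cancel_mono Astar.arrow).1
      rw [Subobject.ofLE_arrow, hι p]
    rw [this]
    dsimp [ι, φstar]
    simp only [Category.assoc, Iso.inv_hom_id_assoc]
    erw [Category.assoc, Iso.inv_hom_id_assoc, colimit.ι_desc]
    dsimp [cI]
    have h : (p : Ext i f) ≤ (e.inverse.obj (e.functor.obj p) : Ext i f) :=
      leOfHom (e.unit.app p)
    obtain ⟨hA, hφ⟩ := h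
    have : Subobject.underlying.map (mon.functor.map (e.unit.app p)) =
        Subobject.ofLE _ _ hA := by
      apply (cancel_mono ((e.inverse.obj (e.functor.obj p)).1.A).arrow).1
      exact (Subobject.underlying_arrow (mon.functor.map (e.unit.app p))).trans
        (Subobject.ofLE_arrow hA).symm
    erw [this, hφ]
  -- build the Ext element
  obtain ⟨p₀, hp₀⟩ := hne
  have fac : Astar.Factors i := Subobject.factors_of_le i (hle ⟨p₀, hp₀⟩) p₀.fac
  refine ⟨⟨Astar, fac, φstar, ?_⟩, ?_⟩
  · rw [Subobject.factorThru_ofLE (hle ⟨p₀, hp₀⟩) p₀.fac, Category.assoc,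
      hcompat ⟨p₀, hp₀⟩, p₀.comm]
  · intro p hp
    exact ⟨hle ⟨p, hp⟩, hcompat ⟨p, hp⟩⟩

end Chain

lemma isMax_top {U : C} (hU : IsSeparator U)
    (hext : ∀ (U' : Subobject U) (h : (U' : C) ⟶ I), ∃ g : U ⟶ I, U'.arrow ≫ g = h)
    (M : Ext i f) (hM : IsMax M) : M.A = ⊤ := by
  by_contra hMA
  -- the cokernel projection is nonzero
  have hπ0 : cokernel.π M.A.arrow ≠ 0 := by
    intro h0
    haveI : Epi M.A.arrow := Abelian.epi_of_cokernel_π_eq_zero _ h0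
    exact hMA ((Subobject.isIso_arrow_iff_eq_top M.A).1 (isIso_of_mono_of_epi _))
  -- a morphism from U not factoring through M.A
  obtain ⟨u, hu⟩ : ∃ u : U ⟶ Y, u ≫ cokernel.π M.A.arrow ≠ 0 := by
    by_contra hall
    push_neg at hall
    exact hπ0 (hU.def (cokernel.π M.A.arrow) 0 (fun h => by rw [hall h, Limits.comp_zero]))
  -- extend over the subobject of U given by pulling back M.A along u
  obtain ⟨g, hg⟩ := hext (Subobject.mk (pullback.fst u M.A.arrow))
    ((Subobject.underlyingIso (pullback.fst u M.A.arrow)).hom ≫ pullback.snd u M.A.arrow ≫ M.φ)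
  have hp1g : pullback.fst u M.A.arrow ≫ g = pullback.snd u M.A.arrow ≫ M.φ := by
    rw [← Subobject.underlyingIso_arrow (pullback.fst u M.A.arrow), Category.assoc, hg,
      Iso.inv_hom_id_assoc]
  -- descend g to the image of u
  have hκ : kernel.ι (factorThruImage u) ≫ g = 0 := by
    have h0 : kernel.ι (factorThruImage u) ≫ u = 0 := by
      calc kernel.ι (factorThruImage u) ≫ u
          = kernel.ι (factorThruImage u) ≫ factorThruImage u ≫ image.ι u := by
            rw [image.fac u]
        _ = 0 := by rw [kernel.condition_assoc, zero_comp]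
    have hl := pullback.lift_fst (f := u) (g := M.A.arrow) (kernel.ι (factorThruImage u)) 0
      (by rw [h0, zero_comp])
    rw [← hl, Category.assoc, hp1g, pullback.lift_snd_assoc, zero_comp]
  have hfg : factorThruImage u ≫ Abelian.epiDesc (factorThruImage u) g hκ = g :=
    Abelian.comp_epiDesc _ _ _
  -- the combined map `c'` onto `M.A ⊔ image u`, and the map `h` to `I`
  have hkc : kernel.ι (biprod.desc M.A.arrow (image.ι u)) ≫
      biprod.desc M.φ (Abelian.epiDesc (factorThruImage u) g hκ) = 0 := by
    have key : biprod.desc M.A.arrow (image.ι u) =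
        biprod.fst ≫ M.A.arrow + biprod.snd ≫ image.ι u := by
      apply biprod.hom_ext' <;> simp
    have keyh : biprod.desc M.φ (Abelian.epiDesc (factorThruImage u) g hκ) =
        biprod.fst ≫ M.φ + biprod.snd ≫ Abelian.epiDesc (factorThruImage u) g hκ := by
      apply biprod.hom_ext' <;> simp
    set z := kernel.ι (biprod.desc M.A.arrow (image.ι u)) with hzdef
    have hz0 : z ≫ biprod.fst ≫ M.A.arrow + z ≫ biprod.snd ≫ image.ι u = 0 := by
      calc z ≫ biprod.fst ≫ M.A.arrow + z ≫ biprod.snd ≫ image.ι u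
          = z ≫ (biprod.fst ≫ M.A.arrow + biprod.snd ≫ image.ι u) := by
            rw [Preadditive.comp_add]
        _ = z ≫ biprod.desc M.A.arrow (image.ι u) := by rw [← key]
        _ = 0 := kernel.condition _
    -- pull back along the epi `factorThruImage u`
    haveI : Epi (pullback.snd (factorThruImage u) (z ≫ biprod.snd)) := inferInstance
    have hcond : pullback.fst (factorThruImage u) (z ≫ biprod.snd) ≫ factorThruImage u =
        pullback.snd (factorThruImage u) (z ≫ biprod.snd) ≫ z ≫ biprod.snd := by
      simpa using pullback.condition (f := factorThruImage u) (g := z ≫ biprod.snd)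
    set w := pullback.snd (factorThruImage u) (z ≫ biprod.snd) with hwdef
    set t := pullback.fst (factorThruImage u) (z ≫ biprod.snd) with htdef
    have htu : t ≫ u = (-(w ≫ z ≫ biprod.fst)) ≫ M.A.arrow := by
      calc t ≫ u = t ≫ factorThruImage u ≫ image.ι u := by rw [image.fac u]
        _ = (t ≫ factorThruImage u) ≫ image.ι u := by rw [Category.assoc]
        _ = (w ≫ z ≫ biprod.snd) ≫ image.ι u := by rw [hcond]
        _ = w ≫ z ≫ biprod.snd ≫ image.ι u := by simp only [Category.assoc]
        _ = w ≫ (z ≫ biprod.snd ≫ image.ι u + z ≫ biprod.fst ≫ M.A.arrow)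
            - w ≫ z ≫ biprod.fst ≫ M.A.arrow := by
            rw [Preadditive.comp_add]; abel
        _ = -(w ≫ z ≫ biprod.fst ≫ M.A.arrow) := by
            rw [show z ≫ biprod.snd ≫ image.ι u + z ≫ biprod.fst ≫ M.A.arrow = 0 by
              rw [add_comm]; exact hz0]
            rw [comp_zero]; abel
        _ = (-(w ≫ z ≫ biprod.fst)) ≫ M.A.arrow := by
            simp only [Preadditive.neg_comp, Category.assoc]
    have hl1 := pullback.lift_fst (f := u) (g := M.A.arrow) t (-(w ≫ z ≫ biprod.fst)) htu
    have hl2 := pullback.lift_snd (f := u) (g := M.A.arrow) t (-(w ≫ z ≫ biprod.fst)) htu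
    have h2 : w ≫ z ≫ biprod.snd ≫ Abelian.epiDesc (factorThruImage u) g hκ =
        -(w ≫ z ≫ biprod.fst ≫ M.φ) := by
      calc w ≫ z ≫ biprod.snd ≫ Abelian.epiDesc (factorThruImage u) g hκ
          = (w ≫ z ≫ biprod.snd) ≫ Abelian.epiDesc (factorThruImage u) g hκ := by
            simp only [Category.assoc]
        _ = (t ≫ factorThruImage u) ≫ Abelian.epiDesc (factorThruImage u) g hκ := by
            rw [hcond]
        _ = t ≫ g := by rw [Category.assoc, hfg]
        _ = (pullback.lift t (-(w ≫ z ≫ biprod.fst)) htu ≫ pullback.fst u M.A.arrow) ≫ g := by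
            rw [hl1]
        _ = pullback.lift t (-(w ≫ z ≫ biprod.fst)) htu ≫ pullback.snd u M.A.arrow ≫ M.φ := by
            rw [Category.assoc, hp1g]
        _ = (pullback.lift t (-(w ≫ z ≫ biprod.fst)) htu ≫ pullback.snd u M.A.arrow) ≫ M.φ := by
            rw [Category.assoc]
        _ = (-(w ≫ z ≫ biprod.fst)) ≫ M.φ := by rw [hl2]
        _ = -(w ≫ z ≫ biprod.fst ≫ M.φ) := by
            simp only [Preadditive.neg_comp, Category.assoc]
    have hwz : w ≫ z ≫ biprod.desc M.φ (Abelian.epiDesc (factorThruImage u) g hκ) = 0 := by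
      rw [keyh, Preadditive.comp_add, Preadditive.comp_add, h2]
      simp
    rw [← cancel_epi w, hwz, comp_zero]
  -- descend h to the image of c'
  have hke : kernel.ι (factorThruImage (biprod.desc M.A.arrow (image.ι u))) ≫
      biprod.desc M.φ (Abelian.epiDesc (factorThruImage u) g hκ) = 0 := by
    have h0 : kernel.ι (factorThruImage (biprod.desc M.A.arrow (image.ι u))) ≫
        biprod.desc M.A.arrow (image.ι u) = 0 := by
      calc kernel.ι (factorThruImage (biprod.desc M.A.arrow (image.ι u))) ≫
          biprod.desc M.A.arrow (image.ι u)
          = kernel.ι (factorThruImage (biprod.desc M.A.arrow (image.ι u))) ≫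
            factorThruImage (biprod.desc M.A.arrow (image.ι u)) ≫
            image.ι (biprod.desc M.A.arrow (image.ι u)) := by rw [image.fac]
        _ = 0 := by rw [kernel.condition_assoc, zero_comp]
    have hl := kernel.lift_ι (biprod.desc M.A.arrow (image.ι u))
      (kernel.ι (factorThruImage (biprod.desc M.A.arrow (image.ι u)))) h0
    rw [← hl, Category.assoc, hkc, comp_zero]
  have hAB : M.A ≤ Subobject.mk (image.ι (biprod.desc M.A.arrow (image.ι u))) :=
    Subobject.le_mk_of_comm (biprod.inl ≫ factorThruImage (biprod.desc M.A.arrow (image.ι u)))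
      (by rw [Category.assoc, image.fac, biprod.inl_desc])
  have hofLE : Subobject.ofLE _ _ hAB =
      biprod.inl ≫ factorThruImage (biprod.desc M.A.arrow (image.ι u)) ≫
        (Subobject.underlyingIso (image.ι (biprod.desc M.A.arrow (image.ι u)))).inv := by
    apply (cancel_mono (Subobject.mk (image.ι (biprod.desc M.A.arrow (image.ι u)))).arrow).1
    rw [Subobject.ofLE_arrow]
    simp only [Category.assoc, Subobject.underlyingIso_arrow]
    rw [image.fac, biprod.inl_desc]
  have hcomp : Subobject.ofLE _ _ hAB ≫
      ((Subobject.underlyingIso (image.ι (biprod.desc M.A.arrow (image.ι u)))).hom ≫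
        Abelian.epiDesc (factorThruImage (biprod.desc M.A.arrow (image.ι u)))
          (biprod.desc M.φ (Abelian.epiDesc (factorThruImage u) g hκ)) hke) = M.φ := by
    rw [hofLE]
    simp only [Category.assoc, Iso.inv_hom_id_assoc]
    rw [Abelian.comp_epiDesc, biprod.inl_desc]
  have hNfac : (Subobject.mk (image.ι (biprod.desc M.A.arrow (image.ι u)))).Factors i :=
    Subobject.factors_of_le i hAB M.fac
  have hMN : M ≤ (⟨Subobject.mk (image.ι (biprod.desc M.A.arrow (image.ι u))), hNfac,
      (Subobject.underlyingIso (image.ι (biprod.desc M.A.arrow (image.ι u)))).hom ≫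
        Abelian.epiDesc (factorThruImage (biprod.desc M.A.arrow (image.ι u)))
          (biprod.desc M.φ (Abelian.epiDesc (factorThruImage u) g hκ)) hke, by
      rw [Subobject.factorThru_ofLE hAB M.fac, Category.assoc, hcomp, M.comm]⟩ : Ext i f) :=
    ⟨hAB, hcomp⟩
  have hBA : Subobject.mk (image.ι (biprod.desc M.A.arrow (image.ι u))) ≤ M.A := (hM hMN).1
  -- now u factors through M.A, contradiction
  have hufac : M.A.Factors u := by
    rw [Subobject.factors_iff]
    refine ⟨factorThruImage u ≫ biprod.inr ≫
      factorThruImage (biprod.desc M.A.arrow (image.ι u)) ≫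
      (Subobject.underlyingIso (image.ι (biprod.desc M.A.arrow (image.ι u)))).inv ≫
      Subobject.ofLE _ _ hBA, ?_⟩
    simp only [Subobject.representative_arrow, Category.assoc, Subobject.ofLE_arrow,
      Subobject.underlyingIso_arrow]
    erw [Category.assoc, Category.assoc, Category.assoc, Category.assoc, Subobject.ofLE_arrow,
      Subobject.underlyingIso_arrow, image.fac, biprod.inr_desc, image.fac]
  apply hu
  rw [← Subobject.factorThru_arrow M.A u hufac, Category.assoc,
    cokernel.condition, comp_zero]


end BaerAux

open BaerAux in
/-- Baer's criterion in a Grothendieck abelian category with generator `U`: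
an object `I` is injective if and only if every morphism `U' → I` from a
subobject `U' ⊆ U` extends to `U`. -/
theorem injective_iff_extends_from_subobjects_of_separator
    {C : Type*} [Category C] [Abelian C] [HasColimits C]
    [HasFilteredColimits C] [AB5 C]
    (U : C) (hU : IsSeparator U) (I : C) :
    Injective I ↔
      ∀ (U' : Subobject U) (f : (U' : C) ⟶ I),
        ∃ g : U ⟶ I, U'.arrow ≫ g = f := by
  constructor
  · intro hI U' h
    exact Injective.factors h U'.arrow
  · intro hext
    haveI := wellPowered_of_isDetector U hU.isDetector
    constructor
    intro Xo Yo ff ee hmono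
    obtain ⟨M, hM⟩ := zorn_le (α := Ext ee ff) (fun c hc => by
      rcases c.eq_empty_or_nonempty with rfl | hne
      · exact ⟨Ext.base ee ff, fun p hp => absurd hp (Set.notMem_empty p)⟩
      · obtain ⟨ub, hub⟩ := chain_ub c hc hne
        exact ⟨ub, fun p hp => hub p hp⟩)
    have htop := isMax_top hU hext M hM
    haveI : IsIso M.A.arrow := (Subobject.isIso_arrow_iff_eq_top M.A).2 htop
    refine ⟨inv M.A.arrow ≫ M.φ, ?_⟩
    have h1 : ee ≫ inv M.A.arrow ≫ M.φ =
        (M.A.factorThru ee M.fac ≫ M.A.arrow) ≫ inv M.A.arrow ≫ M.φ := by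
      rw [Subobject.factorThru_arrow]
    rw [h1, Category.assoc, IsIso.hom_inv_id_assoc]
    exact M.comm
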